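/- Let θ be a reflexive and transitive binary relation on {1, 2, ..., n} and let R be a left Noetherian ring. If A ∈ M_n(θ,R) is invertible in M_n(R), then A⁻¹ ∈ M_n(θ,R). -/

import Mathlib

/-- Let `θ` be a reflexive and transitive binary relation on `{1, …, n}` and let `R` be a
left Noetherian ring.  If `A` belongs to the structural matrix ring
`Mₙ(θ,R) = {A ∈ Mₙ(R) : A i j = 0 whenever (i,j) ∉ θ}` and is invertible in `Mₙ(R)`,
then `A⁻¹ ∈ Mₙ(θ,R)`. -/
theorem stmt_10 {R : Type*} [Ring R] [IsNoetherianRing R] {n : ℕ}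
    (θ : Fin n → Fin n → Prop)
    (hrefl : ∀ i, θ i i) (htrans : ∀ i j k, θ i j → θ j k → θ i k)
    (A : (Matrix (Fin n) (Fin n) R)ˣ)
    (hA : ∀ i j, ¬ θ i j → A.val i j = 0) :
    ∀ i j, ¬ θ i j → (A⁻¹).val i j = 0 := by
  intro i j hij
  -- right multiplication by `A` and by `A⁻¹` as linear endomorphisms of row vectors
  let f : Module.End R (Fin n → R) :=
    { toFun := fun v => Matrix.vecMul v A.val
      map_add' := fun x y => Matrix.add_vecMul A.val x y
      map_smul' := fun r x => Matrix.smul_vecMul r x A.val }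
  let g : Module.End R (Fin n → R) :=
    { toFun := fun v => Matrix.vecMul v (A⁻¹).val
      map_add' := fun x y => Matrix.add_vecMul (A⁻¹).val x y
      map_smul' := fun r x => Matrix.smul_vecMul r x (A⁻¹).val }
  have hfg : f * g = 1 := by
    refine LinearMap.ext fun v => ?_
    show Matrix.vecMul (Matrix.vecMul v (A⁻¹).val) A.val = v
    rw [Matrix.vecMul_vecMul, A.inv_mul, Matrix.vecMul_one]
  have hgf : g * f = 1 := by
    refine LinearMap.ext fun v => ?_
    show Matrix.vecMul (Matrix.vecMul v A.val) (A⁻¹).val = v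
    rw [Matrix.vecMul_vecMul, A.mul_inv, Matrix.vecMul_one]
  -- the submodule of row vectors supported on the upper set of `i`
  let V : Submodule R (Fin n → R) :=
    { carrier := {v | ∀ k, ¬ θ i k → v k = 0}
      add_mem' := fun hx hy k hk => by
        simp only [Pi.add_apply, hx k hk, hy k hk, add_zero]
      zero_mem' := fun k _ => rfl
      smul_mem' := fun r v hv k hk => by
        simp only [Pi.smul_apply, hv k hk, smul_zero] }
  have hfV : ∀ v ∈ V, f v ∈ V := by
    intro v hv k hk
    show ∑ l, v l * A.val l k = 0
    refine Finset.sum_eq_zero fun l _ => ?_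
    by_cases hl : θ i l
    · rw [hA l k (fun h => hk (htrans i l k hl h)), mul_zero]
    · rw [hv l hl, zero_mul]
  -- the ascending chain `V ⊆ V g ⊆ V g² ⊆ …`
  have hVsub : ∀ m : ℕ, V.map (g ^ m) ≤ V.map (g ^ (m + 1)) := by
    intro m x hx
    obtain ⟨v, hv, rfl⟩ := hx
    refine ⟨f v, hfV v hv, ?_⟩
    have : (g ^ (m + 1)) (f v) = (g ^ m) ((g * f) v) := by
      rw [pow_succ]
      rfl
    rw [this, hgf]
    rfl
  let c : ℕ →o Submodule R (Fin n → R) :=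
    ⟨fun m => V.map (g ^ m), monotone_nat_of_le_succ hVsub⟩
  obtain ⟨m, hm⟩ := monotone_stabilizes_iff_noetherian.mpr (inferInstance : IsNoetherian R (Fin n → R)) c
  have hstable : V.map (g ^ m) = V.map (g ^ (m + 1)) := hm (m + 1) (Nat.le_succ m)
  -- pull back by `f ^ m` to get `V = V.map g`
  have hpow : ∀ t : ℕ, f ^ t * g ^ t = 1 := by
    intro t
    induction t with
    | zero => simp
    | succ t ih =>
      rw [pow_succ, pow_succ', mul_assoc, ← mul_assoc f g, hfg, one_mul, ih]
  have key : V.map g = V := by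
    have h1 : (V.map (g ^ (m + 1))).map (f ^ m) = V.map g := by
      rw [← Submodule.map_comp, ← Module.End.mul_eq_comp, pow_succ, ← mul_assoc, hpow m, one_mul]
    have h2 : (V.map (g ^ m)).map (f ^ m) = V := by
      rw [← Submodule.map_comp, ← Module.End.mul_eq_comp, hpow m, Module.End.one_eq_id,
        Submodule.map_id]
    rw [← h1, ← hstable, h2]
  -- conclude
  have hrow : (fun k => (A⁻¹).val i k) ∈ V := by
    have : Pi.single i (1 : R) ∈ V := by
      intro k hk
      have : k ≠ i := fun h => hk (h ▸ hrefl i)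
      simp [Pi.single_apply, this.symm]
    have hmem : g (Pi.single i (1 : R)) ∈ V.map g := ⟨_, this, rfl⟩
    rw [key] at hmem
    have : g (Pi.single i (1 : R)) = fun k => (A⁻¹).val i k := by
      show Matrix.vecMul (Pi.single i (1 : R)) (A⁻¹).val = _
      rw [Matrix.single_one_vecMul]
      rfl
    rwa [this] at hmem
  exact hrow j hij
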